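/- Let A, B ∈ ℂ, and set J = |A|² + |B|² and K = A·conj(B) + B·conj(A). Define u₁, u₋₁ : ℝ → ℂ by u₁(t) = e^{−i(1+2K)t}·( A·cos(2Jt) − i·B·sin(2Jt) ) and u₋₁(t) = e^{−i(1+2K)t}·( B·cos(2Jt) − i·A·sin(2Jt) ). Then u₁(0) = A, u₋₁(0) = B, and for every t ∈ ℝ: u₁'(t) = −i·( (1 + 2·(u₁(t)·conj(u₋₁(t)) + u₋₁(t)·conj(u₁(t))))·u₁(t) + 2·(|u₁(t)|² + |u₋₁(t)|²)·u₋₁(t) ) and u₋₁'(t) = −i·( (1 + 2·(u₁(t)·conj(u₋₁(t)) + u₋₁(t)·conj(u₁(t))))·u₋₁(t) + 2·(|u₁(t)|² + |u₋₁(t)|²)·u₁(t) ). -/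

import Mathlib

/-- The explicit beating-mode profiles solve the two-dimensional Hamiltonian system
`∂ₜu₁ = −i((1+2K)u₁ + 2J uneg)`, `∂ₜuneg = −i((1+2K)uneg + 2J u₁)` with
`J = |u₁|² + |uneg|²`, `K = u₁ū₋₁ + unegū₁`, and initial data `(A, B)`. -/
theorem explicit_solution_two_mode_system (A B : ℂ)
    (J K : ℂ)
    (hJ : J = (‖A‖ : ℂ) ^ 2 + (‖B‖ : ℂ) ^ 2)
    (hK : K = A * (starRingEnd ℂ) B + B * (starRingEnd ℂ) A)
    (u₁ uneg : ℝ → ℂ)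
    (hu₁ : u₁ = fun t : ℝ => Complex.exp (-Complex.I * (1 + 2 * K) * (t : ℂ)) *
      (A * Complex.cos (2 * J * (t : ℂ)) - Complex.I * B * Complex.sin (2 * J * (t : ℂ))))
    (huneg : uneg = fun t : ℝ => Complex.exp (-Complex.I * (1 + 2 * K) * (t : ℂ)) *
      (B * Complex.cos (2 * J * (t : ℂ)) - Complex.I * A * Complex.sin (2 * J * (t : ℂ)))) :
    u₁ 0 = A ∧ uneg 0 = B ∧ ∀ t : ℝ,
      HasDerivAt u₁
        (-Complex.I * ((1 + 2 * (u₁ t * (starRingEnd ℂ) (uneg t)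
            + uneg t * (starRingEnd ℂ) (u₁ t))) * u₁ t
          + 2 * ((‖u₁ t‖ : ℂ) ^ 2 + (‖uneg t‖ : ℂ) ^ 2) * uneg t)) t ∧
      HasDerivAt uneg
        (-Complex.I * ((1 + 2 * (u₁ t * (starRingEnd ℂ) (uneg t)
            + uneg t * (starRingEnd ℂ) (u₁ t))) * uneg t
          + 2 * ((‖u₁ t‖ : ℂ) ^ 2 + (‖uneg t‖ : ℂ) ^ 2) * u₁ t)) t := by
  have hKc : (starRingEnd ℂ) K = K := by
    rw [hK]; simp only [map_add, map_mul, Complex.conj_conj]; ring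
  have hJc : (starRingEnd ℂ) J = J := by
    rw [hJ]; simp
  have habs : ∀ z : ℂ, ((‖z‖ : ℝ) : ℂ) ^ 2 = z * (starRingEnd ℂ) z := by
    intro z
    rw [← Complex.ofReal_pow, Complex.sq_norm, Complex.mul_conj]
  refine ⟨by simp [hu₁], by simp [huneg], fun t => ?_⟩
  -- abbreviations
  set c : ℂ := Complex.cos (2 * J * (t : ℂ)) with hc
  set s : ℂ := Complex.sin (2 * J * (t : ℂ)) with hs
  set E : ℂ := Complex.exp (-Complex.I * (1 + 2 * K) * (t : ℂ)) with hE
  have harg : (starRingEnd ℂ) (2 * J * (t : ℂ)) = 2 * J * (t : ℂ) := by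
    rw [map_mul, map_mul, hJc, Complex.conj_ofReal, map_ofNat]
  have hccos : (starRingEnd ℂ) c = c := by
    rw [hc, ← Complex.cos_conj, harg]
  have hcsin : (starRingEnd ℂ) s = s := by
    rw [hs, ← Complex.sin_conj, harg]
  have hcE : (starRingEnd ℂ) E = Complex.exp (Complex.I * (1 + 2 * K) * (t : ℂ)) := by
    rw [hE, ← Complex.exp_conj]
    congr 1
    simp only [map_mul, map_add, map_neg, Complex.conj_I, map_one, map_ofNat, hKc,
      Complex.conj_ofReal]
    ring
  have hE1 : E * (starRingEnd ℂ) E = 1 := by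
    rw [hcE, hE, ← Complex.exp_add, show -Complex.I * (1 + 2 * K) * (t : ℂ) +
      Complex.I * (1 + 2 * K) * (t : ℂ) = 0 by ring, Complex.exp_zero]
  have pyth : c ^ 2 + s ^ 2 = 1 := by
    rw [hc, hs, ← Complex.cos_sq_add_sin_sq (2 * J * (t : ℂ))]
  have hu1t : u₁ t = E * (A * c - Complex.I * B * s) := by rw [hu₁]
  have hunt : uneg t = E * (B * c - Complex.I * A * s) := by rw [huneg]
  have hcu1 : (starRingEnd ℂ) (u₁ t) = (starRingEnd ℂ) E *
      ((starRingEnd ℂ) A * c + Complex.I * (starRingEnd ℂ) B * s) := by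
    rw [hu1t]
    simp only [map_mul, map_sub, Complex.conj_I, hccos, hcsin]
    ring
  have hcun : (starRingEnd ℂ) (uneg t) = (starRingEnd ℂ) E *
      ((starRingEnd ℂ) B * c + Complex.I * (starRingEnd ℂ) A * s) := by
    rw [hunt]
    simp only [map_mul, map_sub, Complex.conj_I, hccos, hcsin]
    ring
  have hKt : u₁ t * (starRingEnd ℂ) (uneg t) + uneg t * (starRingEnd ℂ) (u₁ t) = K := by
    rw [hcu1, hcun, hu1t, hunt, hK]
    linear_combination ((A * (starRingEnd ℂ) B + B * (starRingEnd ℂ) A) * (c ^ 2 + s ^ 2)) * hE1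
      + (A * (starRingEnd ℂ) B + B * (starRingEnd ℂ) A) * pyth
      + (-(E * s ^ 2 * (starRingEnd ℂ) E *
          (A * (starRingEnd ℂ) B + B * (starRingEnd ℂ) A))) * Complex.I_sq
  have hJt : ((‖u₁ t‖ : ℝ) : ℂ) ^ 2 + ((‖uneg t‖ : ℝ) : ℂ) ^ 2 = J := by
    rw [habs, habs, hcu1, hcun, hu1t, hunt, hJ, habs, habs]
    linear_combination ((A * (starRingEnd ℂ) A + B * (starRingEnd ℂ) B) * (c ^ 2 + s ^ 2)) * hE1
      + (A * (starRingEnd ℂ) A + B * (starRingEnd ℂ) B) * pyth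
      + (-(E * s ^ 2 * (starRingEnd ℂ) E *
          (A * (starRingEnd ℂ) A + B * (starRingEnd ℂ) B))) * Complex.I_sq
  -- derivatives
  have hlin : ∀ (w : ℂ), HasDerivAt (fun z : ℂ => w * z) w ((t : ℝ) : ℂ) := fun w => by
    simpa using (hasDerivAt_id ((t : ℝ) : ℂ)).const_mul w
  have hexp : HasDerivAt (fun r : ℝ => Complex.exp (-Complex.I * (1 + 2 * K) * (r : ℂ)))
      (E * (-Complex.I * (1 + 2 * K))) t := ((hlin _).cexp).comp_ofReal
  have hcos : HasDerivAt (fun r : ℝ => Complex.cos (2 * J * (r : ℂ))) (-s * (2 * J)) t :=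
    ((hlin _).ccos).comp_ofReal
  have hsin : HasDerivAt (fun r : ℝ => Complex.sin (2 * J * (r : ℂ))) (c * (2 * J)) t :=
    ((hlin _).csin).comp_ofReal
  constructor
  · have h := hexp.mul (((hcos.const_mul A).sub ((hsin.const_mul (Complex.I * B)))))
    simp only [Pi.mul_def, Pi.sub_def] at h
    rw [← hu₁] at h
    refine h.congr_deriv (Eq.symm ?_)
    rw [hKt, hJt, hu1t, hunt, ← hE, ← hc, ← hs]
    linear_combination (2 * E * A * s * J) * Complex.I_sq
  · have h := hexp.mul (((hcos.const_mul B).sub ((hsin.const_mul (Complex.I * A)))))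
    simp only [Pi.mul_def, Pi.sub_def] at h
    rw [← huneg] at h
    refine h.congr_deriv (Eq.symm ?_)
    rw [hKt, hJt, hu1t, hunt, ← hE, ← hc, ← hs]
    linear_combination (2 * E * B * s * J) * Complex.I_sq
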